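/- The numbers e^0, e^1, e^2, …, e^{N−1} (powers of Euler's number e) are linearly independent over the rationals for every N ≥ 1. -/

import Mathlib

open BigOperators Polynomial Finset

namespace ETrans

/-- Analytic estimate: the Hermite integral bound, packaged without integrals on the surface. -/
lemma analytic_bound (Q : ℝ[X]) {k M : ℝ} (hk : 0 ≤ k)
    (hM : ∀ t ∈ Set.Icc 0 k, |Q.eval t| ≤ M) :
    |Real.exp k * (sumIDeriv Q).eval 0 - (sumIDeriv Q).eval k| ≤ Real.exp k * (M * k) := by
  set F := sumIDeriv Q with hF
  have hder : derivative F = F - Q := by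
    rw [← sumIDeriv_derivative, eq_sub_iff_add_eq', sumIDeriv_derivative, ← sumIDeriv_eq_self_add]
  have hd : ∀ x : ℝ, HasDerivAt (fun t => Real.exp (-t) * F.eval t)
      (-(Real.exp (-x) * Q.eval x)) x := by
    intro x
    have h1 : HasDerivAt (fun t : ℝ => Real.exp (-t)) (-Real.exp (-x)) x := by
      simpa using (hasDerivAt_neg x).exp
    have h2 : HasDerivAt (fun t : ℝ => F.eval t) (F.derivative.eval x) x := F.hasDerivAt x
    have h3 := h1.mul h2
    refine h3.congr_deriv ?_
    rw [hder, eval_sub]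
    ring
  have hcont : Continuous fun t : ℝ => -(Real.exp (-t) * Q.eval t) :=
    ((Real.continuous_exp.comp continuous_neg).mul Q.continuous).neg
  have hint : ∫ t in (0:ℝ)..k, -(Real.exp (-t) * Q.eval t)
      = Real.exp (-k) * F.eval k - Real.exp (-0) * F.eval 0 :=
    intervalIntegral.integral_eq_sub_of_hasDerivAt (fun t _ => hd t)
      (hcont.intervalIntegrable 0 k)
  have hbound : |∫ t in (0:ℝ)..k, -(Real.exp (-t) * Q.eval t)| ≤ M * k := by
    have h := intervalIntegral.norm_integral_le_of_norm_le_const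
      (C := M) (f := fun t : ℝ => -(Real.exp (-t) * Q.eval t)) (a := 0) (b := k) ?_
    · simpa [Real.norm_eq_abs, abs_of_nonneg hk] using h
    · intro x hx
      rw [Set.uIoc_of_le hk] at hx
      have hx0 : 0 ≤ x := le_of_lt hx.1
      have hxk : x ≤ k := hx.2
      have he1 : Real.exp (-x) ≤ 1 := Real.exp_le_one_iff.mpr (by linarith)
      have he0 : 0 ≤ Real.exp (-x) := (Real.exp_pos _).le
      have hq := hM x ⟨hx0, hxk⟩
      calc ‖-(Real.exp (-x) * Q.eval x)‖ = Real.exp (-x) * |Q.eval x| := by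
            rw [Real.norm_eq_abs, abs_neg, abs_mul, abs_of_nonneg he0]
        _ ≤ 1 * |Q.eval x| := mul_le_mul_of_nonneg_right he1 (abs_nonneg _)
        _ = |Q.eval x| := one_mul _
        _ ≤ M := hq
  rw [hint] at hbound
  have hexp : Real.exp k * Real.exp (-k) = 1 := by
    rw [← Real.exp_add]; simp
  have key : Real.exp k * F.eval 0 - F.eval k
      = -(Real.exp k * (Real.exp (-k) * F.eval k - Real.exp (-0) * F.eval 0)) := by
    have : Real.exp k * (Real.exp (-k) * F.eval k) = F.eval k := by
      rw [← mul_assoc, hexp, one_mul]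
    simp only [neg_zero, Real.exp_zero, one_mul, mul_sub, this]
    ring
  rw [key, abs_neg, abs_mul, abs_of_nonneg (Real.exp_pos k).le]
  exact mul_le_mul_of_nonneg_left hbound (Real.exp_pos k).le


lemma aeval_int (r : ℤ) (q : ℤ[X]) : Polynomial.aeval r q = q.eval r := by
  simp [Polynomial.aeval_def, eval₂_eq_eval_map, algebraMap_int_eq, Int.castRingHom_int,
    Polynomial.map_id]

set_option maxHeartbeats 1000000 in
lemma no_int_relation (f : ℤ[X]) (hc0 : f.coeff 0 ≠ 0)
    (hf : Polynomial.aeval (Real.exp 1) f = 0) : False := by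
  classical
  set n := f.natDegree with hn
  -- n ≥ 1
  have hn1 : 1 ≤ n := by
    by_contra h
    push_neg at h
    interval_cases n
    · have hfC : f = C (f.coeff 0) := Polynomial.eq_C_of_natDegree_eq_zero hn.symm
      rw [hfC] at hf
      simp at hf
      exact hc0 hf
  -- the real relation
  have hsum : ∑ k ∈ range (n + 1), (f.coeff k : ℝ) * Real.exp k = 0 := by
    have h : ∑ i ∈ range (n+1), f.coeff i • Real.exp 1 ^ i = 0 := by
      rw [← Polynomial.aeval_eq_sum_range]; exact hf
    rw [← h]
    refine Finset.sum_congr rfl fun k _ => ?_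
    rw [zsmul_eq_mul, ← Real.exp_nat_mul, mul_one]
  -- constants for the analytic bound
  set S : ℝ := ∑ k ∈ range (n + 1), |(f.coeff k : ℝ)| with hS
  set A0 : ℝ := S * Real.exp n * n with hA0
  set Cc : ℝ := (n : ℝ) ^ (n + 1) with hCc
  have hn1R : (1 : ℝ) ≤ n := by exact_mod_cast hn1
  have hS0 : 0 ≤ S := Finset.sum_nonneg fun k _ => abs_nonneg _
  have hA00 : 0 ≤ A0 := by positivity
  have hC1 : 1 ≤ Cc := one_le_pow₀ hn1R
  have hC0 : (0:ℝ) < Cc := lt_of_lt_of_le one_pos hC1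
  -- choose the prime
  obtain ⟨m0, hm0⟩ := Filter.eventually_atTop.mp
    ((FloorSemiring.tendsto_pow_div_factorial_atTop (K := ℝ) Cc).eventually_lt_const
      (show (0:ℝ) < (A0 * Cc + 1)⁻¹ by positivity))
  obtain ⟨p, hple, hp⟩ :=
    Nat.exists_infinite_primes (max (max (n + 1) ((f.coeff 0).natAbs + 1)) (m0 + 1))
  have hpn : n < p := lt_of_lt_of_le (Nat.lt_succ_self n)
    (le_trans (le_max_left _ _) (le_trans (le_max_left _ _) hple))
  have hpc0 : (f.coeff 0).natAbs < p := lt_of_lt_of_le (Nat.lt_succ_self _)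
    (le_trans (le_max_right _ _) (le_trans (le_max_left _ _) hple))
  have hpm0 : m0 ≤ p - 1 := by
    have : m0 + 1 ≤ p := le_trans (le_max_right _ _) hple
    omega
  have hp1 : 1 ≤ p := hp.one_lt.le
  have hp0 : 0 < p := hp.pos
  -- the polynomials
  set W : ℤ[X] := ∏ i ∈ range n, (X - C ((i : ℤ) + 1)) with hW
  set P : ℤ[X] := X ^ (p - 1) * W ^ p with hP
  set F : ℤ[X] := sumIDeriv P with hF
  set J : ℤ := ∑ k ∈ range (n + 1), f.coeff k * F.eval (k : ℤ) with hJ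
  have hinj : Function.Injective (algebraMap ℤ ℤ) := fun a b h => by simpa using h
  have hmapid : ∀ q : ℤ[X], q.map (algebraMap ℤ ℤ) = q := fun q => by
    rw [algebraMap_int_eq, Int.castRingHom_int, Polynomial.map_id]
  -- value at 0
  obtain ⟨gp, -, hgp⟩ := Polynomial.aeval_sumIDeriv_of_pos (A := ℤ) P hp0 hinj
  have hdec0 : P.map (algebraMap ℤ ℤ) = (X - C (0:ℤ)) ^ (p - 1) * W ^ p := by
    rw [hmapid]; simp [hP]
  have hF0 : F.eval 0 = ((p-1).factorial : ℤ) * (W.eval 0) ^ p + (p.factorial : ℤ) * (gp.eval 0) := by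
    have h := hgp 0 hdec0
    rw [aeval_int, aeval_int] at h
    rw [hF, h]
    simp [nsmul_eq_mul, eval_pow]
  -- values at k+1
  have hFk : ∀ k ∈ range n, ∃ g : ℤ, F.eval ((k : ℤ) + 1) = (p.factorial : ℤ) * g := by
    obtain ⟨gq, -, hgq⟩ := Polynomial.aeval_sumIDeriv (A := ℤ) P p
    intro k hk
    have hdvd : (X - C ((k : ℤ) + 1)) ∣ W := by
      rw [hW]
      exact Finset.dvd_prod_of_mem _ hk
    obtain ⟨V, hV⟩ := hdvd
    refine ⟨gq.eval ((k : ℤ) + 1), ?_⟩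
    have hdec : P.map (algebraMap ℤ ℤ) = (X - C ((k:ℤ)+1)) ^ p * (X ^ (p-1) * V ^ p) := by
      rw [hmapid, hP, hV, mul_pow, mul_left_comm]
    have h := hgq ((k : ℤ) + 1) (Dvd.intro _ hdec.symm)
    rw [aeval_int, aeval_int] at h
    rw [hF, h, nsmul_eq_mul]
  -- split J
  have hJsplit : J = f.coeff 0 * F.eval 0
      + ∑ k ∈ range n, f.coeff (k + 1) * F.eval ((k : ℤ) + 1) := by
    rw [hJ, Finset.sum_range_succ']
    push_cast
    ring
  obtain ⟨T, hT⟩ : ∃ T, ∑ k ∈ range n, f.coeff (k + 1) * F.eval ((k : ℤ) + 1)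
      = (p.factorial : ℤ) * T := by
    have : (p.factorial : ℤ) ∣ ∑ k ∈ range n, f.coeff (k + 1) * F.eval ((k : ℤ) + 1) := by
      refine Finset.dvd_sum fun k hk => ?_
      obtain ⟨g, hg⟩ := hFk k hk
      exact ⟨f.coeff (k+1) * g, by rw [hg]; ring⟩
    exact ⟨this.choose, this.choose_spec⟩
  have hfac : ((p:ℤ)) * ((p-1).factorial : ℤ) = (p.factorial : ℤ) := by
    exact_mod_cast congrArg (Nat.cast : ℕ → ℤ) (Nat.mul_factorial_pred hp0.ne')
  set K : ℤ := f.coeff 0 * (W.eval 0) ^ p + (p:ℤ) * (f.coeff 0 * gp.eval 0 + T) with hK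
  have hJK : J = ((p-1).factorial : ℤ) * K := by
    rw [hJsplit, hF0, hT, hK, ← hfac]
    ring
  -- W.eval 0
  have hW0 : W.eval 0 = (-1) ^ n * (n.factorial : ℤ) := by
    rw [hW, eval_prod]
    simp only [eval_sub, eval_X, eval_C, zero_sub]
    have h1 : ∏ x ∈ range n, -((x:ℤ)+1) = (-1)^n * ∏ x ∈ range n, ((x:ℤ)+1) := by
      calc ∏ x ∈ range n, -((x:ℤ)+1) = ∏ x ∈ range n, ((-1) * ((x:ℤ)+1)) :=
            Finset.prod_congr rfl fun x _ => (neg_one_mul _).symm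
        _ = (-1)^n * ∏ x ∈ range n, ((x:ℤ)+1) := by
            rw [Finset.prod_mul_distrib, Finset.prod_const, card_range]
    have h2 : ∏ x ∈ range n, ((x:ℤ)+1) = (n.factorial : ℤ) := by
      rw [← Finset.prod_range_add_one_eq_factorial n]
      push_cast
      rfl
    rw [h1, h2]
  -- p does not divide K
  have hpK : ¬ (p : ℤ) ∣ K := by
    intro hd
    have hd1 : (p:ℤ) ∣ f.coeff 0 * (W.eval 0) ^ p := by
      have h2 : (p:ℤ) ∣ (p:ℤ) * (f.coeff 0 * gp.eval 0 + T) := Dvd.intro _ rfl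
      have := dvd_sub hd h2
      simpa [hK] using this
    have hprime : Prime (p : ℤ) := Nat.prime_iff_prime_int.mp hp
    rcases hprime.dvd_mul.mp hd1 with h | h
    · have : (p:ℕ) ∣ (f.coeff 0).natAbs := by
        rwa [Int.natCast_dvd] at h
      have := Nat.le_of_dvd (Int.natAbs_pos.mpr hc0) this
      omega
    · have h2 : (p:ℤ) ∣ W.eval 0 := hprime.dvd_of_dvd_pow h
      rw [hW0] at h2
      have h3 : (p:ℤ) ∣ (n.factorial : ℤ) := by
        have h4 := h2.mul_left ((-1:ℤ) ^ n)
        rwa [← mul_assoc, ← mul_pow, neg_one_mul, neg_neg, one_pow, one_mul] at h4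
      have h5 : (p:ℕ) ∣ n.factorial := by exact_mod_cast h3
      exact absurd ((Nat.Prime.dvd_factorial hp).mp h5) (not_le.mpr hpn)
  have hK0 : K ≠ 0 := fun h => hpK (h ▸ dvd_zero _)
  have hJlow : ((p-1).factorial : ℤ) ≤ |J| := by
    rw [hJK, abs_mul, abs_of_nonneg (by positivity : (0:ℤ) ≤ ((p-1).factorial : ℤ))]
    exact le_mul_of_one_le_right (by positivity) (Int.one_le_abs hK0)
  -- analytic side
  set Q : ℝ[X] := P.map (Int.castRingHom ℝ) with hQ
  have hQeval : ∀ t : ℝ, Q.eval t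
      = t ^ (p-1) * (∏ i ∈ range n, (t - ((i:ℝ) + 1))) ^ p := by
    intro t
    rw [hQ, hP, hW]
    simp only [Polynomial.map_mul, Polynomial.map_pow, Polynomial.map_prod,
      Polynomial.map_sub, Polynomial.map_X, Polynomial.map_C, eval_mul, eval_pow,
      eval_prod, eval_sub, eval_X, eval_C, Int.coe_castRingHom]
    push_cast
    ring
  have hQbound : ∀ t ∈ Set.Icc (0:ℝ) (n:ℝ), |Q.eval t| ≤ (n:ℝ) ^ ((n+1) * p) := by
    rintro t ⟨ht0, htn⟩
    rw [hQeval]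
    have habs : |t ^ (p-1) * (∏ i ∈ range n, (t - ((i:ℝ)+1))) ^ p|
        = |t| ^ (p-1) * (∏ i ∈ range n, |t - ((i:ℝ)+1)|) ^ p := by
      simp [abs_mul, abs_pow, Finset.abs_prod]
      
    rw [habs]
    have h1 : |t| ^ (p-1) ≤ (n:ℝ) ^ (p-1) := by
      apply pow_le_pow_left₀ (abs_nonneg t)
      rw [abs_of_nonneg ht0]; exact htn
    have h2 : ∏ i ∈ range n, |t - ((i:ℝ)+1)| ≤ (n:ℝ) ^ n := by
      calc ∏ i ∈ range n, |t - ((i:ℝ)+1)| ≤ ∏ _i ∈ range n, (n:ℝ) := by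
            refine Finset.prod_le_prod (fun i _ => abs_nonneg _) (fun i hi => ?_)
            have hi' : (i:ℝ) + 1 ≤ n := by
              exact_mod_cast Nat.succ_le_of_lt (mem_range.mp hi)
            have hi0 : (1:ℝ) ≤ (i:ℝ) + 1 := by
              have : (0:ℝ) ≤ (i:ℝ) := Nat.cast_nonneg i
              linarith
            rw [abs_le]
            constructor <;> linarith
        _ = (n:ℝ) ^ n := by rw [Finset.prod_const, card_range]
    calc |t| ^ (p-1) * (∏ i ∈ range n, |t - ((i:ℝ)+1)|) ^ p
        ≤ (n:ℝ) ^ (p-1) * ((n:ℝ) ^ n) ^ p := by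
          apply mul_le_mul h1 (pow_le_pow_left₀ (Finset.prod_nonneg fun i _ => abs_nonneg _) h2 p)
            (by positivity) (by positivity)
      _ = (n:ℝ) ^ ((p-1) + n * p) := by rw [← pow_mul, ← pow_add]
      _ ≤ (n:ℝ) ^ ((n+1) * p) := by
          apply pow_le_pow_right₀ hn1R
          rw [add_mul, one_mul, add_comm (p-1)]
          exact Nat.add_le_add_left (Nat.sub_le p 1) _
  -- transfer F to ℝ
  set FR : ℝ[X] := sumIDeriv Q with hFR
  have hcast : ∀ m : ℤ, ((F.eval m : ℤ) : ℝ) = FR.eval (m : ℝ) := by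
    intro m
    rw [hFR, hQ, sumIDeriv_map, eval_intCast_map]
    simp [hF]
  -- error terms
  have hE : ∀ k : ℕ, k ≤ n →
      |Real.exp k * FR.eval 0 - FR.eval (k:ℝ)| ≤ Real.exp n * ((n:ℝ) ^ ((n+1)*p) * n) := by
    intro k hkn
    have hk0 : (0:ℝ) ≤ (k:ℝ) := Nat.cast_nonneg k
    have hknR : (k:ℝ) ≤ (n:ℝ) := Nat.cast_le.mpr hkn
    have h := analytic_bound Q hk0 (fun t ht => hQbound t ⟨ht.1, le_trans ht.2 hknR⟩)
    refine le_trans h ?_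
    have hM0 : (0:ℝ) ≤ (n:ℝ) ^ ((n+1)*p) := by positivity
    apply mul_le_mul (Real.exp_le_exp.mpr hknR)
      (mul_le_mul_of_nonneg_left hknR hM0) (by positivity) (Real.exp_pos _).le
  -- J in ℝ
  have hJreal : (J : ℝ) = ∑ k ∈ range (n+1), (f.coeff k : ℝ) * FR.eval (k:ℝ) := by
    rw [hJ, Int.cast_sum]
    refine Finset.sum_congr rfl fun k _ => ?_
    rw [Int.cast_mul, hcast ((k : ℕ) : ℤ), Int.cast_natCast]
  have hJreal2 : (J : ℝ)
      = -∑ k ∈ range (n+1), (f.coeff k : ℝ) * (Real.exp k * FR.eval 0 - FR.eval (k:ℝ)) := by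
    rw [hJreal]
    rw [eq_neg_iff_add_eq_zero]
    rw [← Finset.sum_add_distrib]
    have : ∀ k ∈ range (n+1), (f.coeff k : ℝ) * FR.eval (k:ℝ)
        + (f.coeff k : ℝ) * (Real.exp k * FR.eval 0 - FR.eval (k:ℝ))
        = ((f.coeff k : ℝ) * Real.exp k) * FR.eval 0 := fun k _ => by ring
    rw [Finset.sum_congr rfl this, ← Finset.sum_mul, hsum, zero_mul]
  have hJup : |(J:ℝ)| ≤ A0 * Cc ^ p := by
    rw [hJreal2, abs_neg]
    refine le_trans (Finset.abs_sum_le_sum_abs _ _) ?_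
    have hterm : ∀ k ∈ range (n+1),
        |(f.coeff k : ℝ) * (Real.exp k * FR.eval 0 - FR.eval (k:ℝ))|
        ≤ |(f.coeff k : ℝ)| * (Real.exp n * ((n:ℝ) ^ ((n+1)*p) * n)) := by
      intro k hk
      rw [abs_mul]
      exact mul_le_mul_of_nonneg_left (hE k (Nat.lt_succ_iff.mp (mem_range.mp hk)))
        (abs_nonneg _)
    refine le_trans (Finset.sum_le_sum hterm) ?_
    rw [← Finset.sum_mul, ← hS, hA0, hCc, ← pow_mul]
    exact le_of_eq (by ring)
  -- final contradiction
  have hlow : ((p-1).factorial : ℝ) ≤ |(J:ℝ)| := by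
    rw [← Int.cast_abs]
    exact_mod_cast hJlow
  have hup2 : A0 * Cc ^ p < ((p-1).factorial : ℝ) := by
    have hfacpos : (0:ℝ) < ((p-1).factorial : ℝ) := by positivity
    have h := hm0 (p-1) hpm0
    rw [div_lt_iff₀ hfacpos] at h
    have hps : p = (p - 1) + 1 := by omega
    have hpow : Cc ^ p = Cc ^ (p-1) * Cc := by
      conv_lhs => rw [hps]
      rw [pow_succ]
    calc A0 * Cc ^ p = (A0 * Cc) * Cc ^ (p-1) := by rw [hpow]; ring
      _ ≤ (A0 * Cc + 1) * Cc ^ (p-1) :=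
          mul_le_mul_of_nonneg_right (by linarith) (by positivity)
      _ < (A0 * Cc + 1) * ((A0 * Cc + 1)⁻¹ * ((p-1).factorial : ℝ)) :=
          mul_lt_mul_of_pos_left h (by positivity)
      _ = ((p-1).factorial : ℝ) := by
          rw [← mul_assoc, mul_inv_cancel₀ (by positivity), one_mul]
  linarith [le_trans hlow hJup]

lemma strip : ∀ (m : ℕ) (f : ℤ[X]), f.natDegree ≤ m → f ≠ 0 →
    Polynomial.aeval (Real.exp 1) f = 0 →
    ∃ g : ℤ[X], g.coeff 0 ≠ 0 ∧ Polynomial.aeval (Real.exp 1) g = 0 := by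
  intro m
  induction m with
  | zero =>
    intro f hdeg hf0 hfe
    by_cases hc : f.coeff 0 ≠ 0
    · exact ⟨f, hc, hfe⟩
    · push_neg at hc
      obtain ⟨g, hg⟩ := Polynomial.X_dvd_iff.mpr hc
      have hg0 : g ≠ 0 := fun h => hf0 (by rw [hg, h, mul_zero])
      have : f.natDegree = 1 + g.natDegree := by
        rw [hg, Polynomial.natDegree_mul Polynomial.X_ne_zero hg0, Polynomial.natDegree_X]
      omega
  | succ m ih =>
    intro f hdeg hf0 hfe
    by_cases hc : f.coeff 0 ≠ 0
    · exact ⟨f, hc, hfe⟩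
    · push_neg at hc
      obtain ⟨g, hg⟩ := Polynomial.X_dvd_iff.mpr hc
      have hg0 : g ≠ 0 := fun h => hf0 (by rw [hg, h, mul_zero])
      have hdeg' : g.natDegree ≤ m := by
        have : f.natDegree = 1 + g.natDegree := by
          rw [hg, Polynomial.natDegree_mul Polynomial.X_ne_zero hg0, Polynomial.natDegree_X]
        omega
      have hge : Polynomial.aeval (Real.exp 1) g = 0 := by
        have h2 : Polynomial.aeval (Real.exp 1) f
            = Real.exp 1 * Polynomial.aeval (Real.exp 1) g := by
          rw [hg, map_mul, Polynomial.aeval_X]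
        rw [h2] at hfe
        rcases mul_eq_zero.mp hfe with h | h
        · exact absurd h (Real.exp_ne_zero 1)
        · exact h
      exact ih g hdeg' hg0 hge

theorem transcendental_exp_one : Transcendental ℤ (Real.exp 1) := by
  intro halg
  obtain ⟨f, hf0, hfe⟩ := halg
  obtain ⟨g, hg0, hge⟩ := strip f.natDegree f le_rfl hf0 hfe
  exact no_int_relation g hg0 hge

end ETrans


theorem exp_powers_linear_independent (N : ℕ) (hN : 1 ≤ N)
    (a : Fin N → ℚ) (h : ∑ k, (a k : ℝ) * Real.exp (k : ℕ) = 0) :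
    ∀ k, a k = 0 := by
  by_contra hcon
  push_neg at hcon
  obtain ⟨j, hj⟩ := hcon
  set q : ℚ[X] := ∑ k : Fin N, C (a k) * X ^ (k : ℕ) with hq
  have hcoeff : q.coeff (j : ℕ) = a j := by
    rw [hq, finset_sum_coeff, Finset.sum_eq_single j]
    · simp [coeff_C_mul, coeff_X_pow]
    · intro b _ hb
      have hbj : ¬((b : ℕ) = (j : ℕ)) := fun he => hb (Fin.ext he)
      simp only [coeff_C_mul, coeff_X_pow]
      rw [if_neg (fun he => hbj he.symm), mul_zero]
    · simp
  have hq0 : q ≠ 0 := by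
    intro h0
    rw [h0, Polynomial.coeff_zero] at hcoeff
    exact hj hcoeff.symm
  have hqe : Polynomial.aeval (Real.exp 1) q = 0 := by
    rw [hq, map_sum, ← h]
    refine Finset.sum_congr rfl fun k _ => ?_
    rw [map_mul, Polynomial.aeval_C, map_pow, Polynomial.aeval_X, ← Real.exp_nat_mul, mul_one]
    norm_num
  have halgQ : IsAlgebraic ℚ (Real.exp 1) := ⟨q, hq0, hqe⟩
  have halgZ : IsAlgebraic ℤ (Real.exp 1) := (IsFractionRing.isAlgebraic_iff ℤ ℚ ℝ).mpr halgQ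
  exact ETrans.transcendental_exp_one halgZ
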